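/- Termination of recursive winding-number evaluation: let γ : [0,1] → ℝ² be C¹ with ‖γ'‖ ≤ B, let p ∈ ℝ², let ε > 0, and let d = dist(p, γ([0,1])). If m is a natural number with 2^m > 2B / max(ε, d), then for every depth-m subinterval [a,b] (of length 2^{-m}), either dist(p, γ(a)) < ε or dist(p, γ(b)) < ε, or p lies outside the ellipse region {x : dist(x,γ(a)) + dist(x,γ(b)) ≤ B(b−a)}. -/
import Mathlib


/-- Termination of the recursive winding-number evaluation: at a deep enough recursion level,
every subinterval either has an endpoint within tolerance `ε` of the query point `p`, or its
bounding ellipse excludes `p`. -/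
theorem recursion_terminates (γ γ' : ℝ → ℝ × ℝ) (B : ℝ) (hB : 0 < B)
    (hderiv : ∀ t ∈ Set.Icc (0:ℝ) 1, HasDerivAt γ (γ' t) t)
    (hbound : ∀ t ∈ Set.Icc (0:ℝ) 1, ‖γ' t‖ ≤ B)
    (p : ℝ × ℝ) (ε : ℝ) (hε : 0 < ε)
    (d : ℝ) (hd : d = Metric.infDist p (γ '' Set.Icc (0:ℝ) 1))
    (m : ℕ) (hm : 2 * B / max ε d < 2 ^ m)
    (k : ℕ) (hk : k < 2 ^ m)
    (a b : ℝ) (ha : a = (k : ℝ) / 2 ^ m) (hb : b = ((k : ℝ) + 1) / 2 ^ m) :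
    dist p (γ a) < ε ∨ dist p (γ b) < ε ∨
      ¬ (dist p (γ a) + dist p (γ b) ≤ B * (b - a)) := by
  by_cases h1 : dist p (γ a) < ε
  · exact Or.inl h1
  by_cases h2 : dist p (γ b) < ε
  · exact Or.inr (Or.inl h2)
  refine Or.inr (Or.inr ?_)
  intro hle
  push_neg at h1 h2
  have hpow : (0:ℝ) < 2 ^ m := by positivity
  have hbmem : b ∈ Set.Icc (0:ℝ) 1 := by
    constructor
    · rw [hb]; positivity
    · rw [hb, div_le_one hpow]
      have : ((k:ℝ) + 1) ≤ ((2:ℝ) ^ m) := by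
        have : (k + 1 : ℕ) ≤ 2 ^ m := hk
        exact_mod_cast this
      simpa using this
  have hdb : d ≤ dist p (γ b) := by
    rw [hd]
    exact Metric.infDist_le_dist_of_mem ⟨b, hbmem, rfl⟩
  have hd0 : 0 ≤ d := hd ▸ Metric.infDist_nonneg
  have hmax : 0 < max ε d := lt_max_of_lt_left hε
  have hba : b - a = 1 / 2 ^ m := by rw [ha, hb]; ring
  have hlt : 2 * B < 2 ^ m * max ε d := (div_lt_iff₀ hmax).mp hm
  have hBba : B * (b - a) < max ε d / 2 := by
    rw [hba, mul_one_div, div_lt_div_iff₀ hpow (by norm_num : (0:ℝ) < 2)]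
    nlinarith
  have hmle : max ε d ≤ ε + d := max_le (by linarith) (by linarith)
  linarith
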